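/- Let H be a hypothesis class with Ldim(H) = d < ∞ and S = ((x_t,y_t))_{t=1}^T an H-realizable sample. The following are equivalent: (A) for each t ∈ [T], Ldim(H_{S_{t−1}}) = max_r Ldim(H_{S_{t−1}}^{(x_t,r)}) and Ldim(H_{S_t}) ≥ Ldim(H_{S_{t−1}}) − 1; (B) every optimal online learner A for H satisfies M_A(S) = Ldim(H) − Ldim(H_S). Moreover, when these hold, every optimal learner predicts A(S_{t−1}, x_t) = argmax_{r∈{0,1}} Ldim(H_{S_{t−1}}^{(x_t,r)}) at every t ∈ [T]. -/
import Mathlib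


open Classical

variable {X : Type*}

/-- A hypothesis `h` is consistent with a sample `S`. -/
def Consistent (h : X → Bool) (S : List (X × Bool)) : Prop :=
  ∀ p ∈ S, h p.1 = p.2

/-- A sample is realizable by the class `H`. -/
def Realizable (H : Set (X → Bool)) (S : List (X × Bool)) : Prop :=
  ∃ h ∈ H, Consistent h S

/-- The version space `H_S`. -/
def VS (H : Set (X → Bool)) (S : List (X × Bool)) : Set (X → Bool) :=
  {h ∈ H | Consistent h S}

/-- `H^{(x,r)}`. -/
def Restrict (H : Set (X → Bool)) (x : X) (r : Bool) : Set (X → Bool) :=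
  {h ∈ H | h x = r}

/-- `Shatters H d` holds iff there is a complete binary tree of depth `d` shattered by `H`,
equivalently stated recursively. -/
def Shatters (H : Set (X → Bool)) : ℕ → Prop
  | 0 => H.Nonempty
  | d + 1 => ∃ x : X, Shatters (Restrict H x false) d ∧ Shatters (Restrict H x true) d

/-- Littlestone dimension, with `Ldim ∅ = ⊥` (playing the role of `-1`). -/
noncomputable def Ldim (H : Set (X → Bool)) : WithBot ℕ∞ :=
  ⨆ d ∈ {d : ℕ | Shatters H d}, ((d : ℕ∞) : WithBot ℕ∞)

def MistakesFrom (A : List (X × Bool) → X → Bool) :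
    List (X × Bool) → List (X × Bool) → ℕ
  | _, [] => 0
  | pre, p :: rest =>
      (if A pre p.1 ≠ p.2 then 1 else 0) + MistakesFrom A (pre ++ [p]) rest

/-- Number of mistakes that the online learner `A` makes on the sample `S`. -/
def Mistakes (A : List (X × Bool) → X → Bool) (S : List (X × Bool)) : ℕ :=
  MistakesFrom A [] S

/-- Mistake bound of `A` with respect to `H`. -/
noncomputable def MB (A : List (X × Bool) → X → Bool) (H : Set (X → Bool)) : ℕ∞ :=
  ⨆ S ∈ {S | Realizable H S}, (Mistakes A S : ℕ∞)

/-- `A` is an optimal online learner for `H`. -/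
def IsOptimal (A : List (X × Bool) → X → Bool) (H : Set (X → Bool)) : Prop :=
  MB A H = ⨅ B : List (X × Bool) → X → Bool, MB B H

/-- Post-`S` mistake bound of `A` w.r.t. `H`. -/
noncomputable def PostMB (A : List (X × Bool) → X → Bool) (H : Set (X → Bool))
    (S : List (X × Bool)) : ℕ∞ :=
  ⨆ S' ∈ {S' | Realizable H (S ++ S')}, ((Mistakes A (S ++ S') - Mistakes A S : ℕ) : ℕ∞)

/-- Optimal post-`S` mistake bound. -/
noncomputable def OptPostMB (H : Set (X → Bool)) (S : List (X × Bool)) : ℕ∞ :=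
  ⨅ A : List (X × Bool) → X → Bool, PostMB A H S

/-- `A` is anytime optimal for `H`. -/
def AnytimeOptimal (A : List (X × Bool) → X → Bool) (H : Set (X → Bool)) : Prop :=
  ∀ S, Realizable H S → PostMB A H S = OptPostMB H S


section Aux

variable {X : Type*}

/-! ### Basic lemmas -/

theorem consistent_append_iff {h : X → Bool} {P Q : List (X × Bool)} :
    Consistent h (P ++ Q) ↔ Consistent h P ∧ Consistent h Q := by
  simp [Consistent, or_imp, forall_and]

theorem vs_nil (H : Set (X → Bool)) : VS H ([] : List (X × Bool)) = H := by
  ext h; simp [VS, Consistent]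

theorem vs_append_singleton (H : Set (X → Bool)) (P : List (X × Bool)) (x : X) (r : Bool) :
    VS H (P ++ [(x, r)]) = Restrict (VS H P) x r := by
  ext h
  simp only [VS, Restrict, Set.mem_setOf_eq, consistent_append_iff]
  constructor
  · rintro ⟨hH, hP, hQ⟩
    exact ⟨⟨hH, hP⟩, hQ (x, r) (by simp)⟩
  · rintro ⟨⟨hH, hP⟩, hx⟩
    refine ⟨hH, hP, ?_⟩
    rintro p hp
    simp only [List.mem_singleton] at hp
    subst hp; exact hx

theorem realizable_iff_vs_nonempty {H : Set (X → Bool)} {P : List (X × Bool)} :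
    Realizable H P ↔ (VS H P).Nonempty := Iff.rfl

theorem realizable_prefix {H : Set (X → Bool)} {P Q : List (X × Bool)}
    (h : Realizable H (P ++ Q)) : Realizable H P := by
  obtain ⟨f, hf, hc⟩ := h
  exact ⟨f, hf, fun p hp => hc p (List.mem_append_left _ hp)⟩

theorem realizable_take {H : Set (X → Bool)} {P : List (X × Bool)}
    (h : Realizable H P) (n : ℕ) : Realizable H (P.take n) := by
  obtain ⟨f, hf, hc⟩ := h
  exact ⟨f, hf, fun p hp => hc p (List.take_subset n P hp)⟩

theorem restrict_subset (H : Set (X → Bool)) (x : X) (r : Bool) : Restrict H x r ⊆ H :=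
  fun _ hh => hh.1

theorem vs_subset (H : Set (X → Bool)) (P : List (X × Bool)) : VS H P ⊆ H :=
  fun _ hh => hh.1

theorem vs_mono {H : Set (X → Bool)} (P : List (X × Bool)) {Q : List (X × Bool)} :
    VS H (P ++ Q) ⊆ VS H P := by
  rintro h ⟨hH, hc⟩
  exact ⟨hH, (consistent_append_iff.mp hc).1⟩

/-! ### Shatters lemmas -/

theorem shatters_mono : ∀ (k : ℕ) {H1 H2 : Set (X → Bool)}, H1 ⊆ H2 →
    Shatters H1 k → Shatters H2 k := by
  intro k
  induction k with
  | zero => intro H1 H2 hs h; exact h.mono hs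
  | succ k ih =>
    rintro H1 H2 hs ⟨x, hf, ht⟩
    exact ⟨x, ih (fun g hg => ⟨hs hg.1, hg.2⟩) hf, ih (fun g hg => ⟨hs hg.1, hg.2⟩) ht⟩

theorem shatters_nonempty : ∀ (k : ℕ) {H : Set (X → Bool)}, Shatters H k → H.Nonempty := by
  intro k
  induction k with
  | zero => intro H h; exact h
  | succ k ih =>
    rintro H ⟨x, hf, _⟩
    exact (ih hf).mono (restrict_subset H x false)

theorem shatters_of_succ {H : Set (X → Bool)} {k : ℕ} (h : Shatters H (k + 1)) :
    Shatters H k := by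
  obtain ⟨x, hf, _⟩ := h
  exact shatters_mono k (restrict_subset H x false) hf

theorem shatters_anti {H : Set (X → Bool)} : ∀ {k k' : ℕ}, k' ≤ k →
    Shatters H k → Shatters H k' := by
  intro k
  induction k with
  | zero => intro k' hk h; exact Nat.le_zero.mp hk ▸ h
  | succ k ih =>
    intro k' hk h
    rcases Nat.lt_or_ge k' (k+1) with h' | h'
    · exact ih (Nat.lt_succ_iff.mp h') (shatters_of_succ h)
    · exact (Nat.le_antisymm hk h') ▸ h

/-! ### Coercion helpers -/

theorem coe2_le {a b : ℕ} : ((a : ℕ∞) : WithBot ℕ∞) ≤ ((b : ℕ∞) : WithBot ℕ∞) ↔ a ≤ b := by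
  rw [WithBot.coe_le_coe, Nat.cast_le]

theorem coe2_lt {a b : ℕ} : ((a : ℕ∞) : WithBot ℕ∞) < ((b : ℕ∞) : WithBot ℕ∞) ↔ a < b := by
  rw [WithBot.coe_lt_coe, Nat.cast_lt]

theorem coe2_inj {a b : ℕ} : ((a : ℕ∞) : WithBot ℕ∞) = ((b : ℕ∞) : WithBot ℕ∞) ↔ a = b := by
  rw [WithBot.coe_inj, Nat.cast_inj]

theorem coe2_add_one {a : ℕ} :
    ((a : ℕ∞) : WithBot ℕ∞) + 1 = (((a + 1 : ℕ) : ℕ∞) : WithBot ℕ∞) := by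
  rw [Nat.cast_add, Nat.cast_one, WithBot.coe_add, WithBot.coe_one]

theorem coe2_add {a b : ℕ} :
    ((a : ℕ∞) : WithBot ℕ∞) + ((b : ℕ∞) : WithBot ℕ∞) = (((a + b : ℕ) : ℕ∞) : WithBot ℕ∞) := by
  rw [Nat.cast_add, WithBot.coe_add]

/-! ### Ldim bridge -/

theorem shatters_le_ldim {H : Set (X → Bool)} {k : ℕ} (h : Shatters H k) :
    ((k : ℕ∞) : WithBot ℕ∞) ≤ Ldim H :=
  le_iSup₂ (f := fun (d : ℕ) (_ : d ∈ {d : ℕ | Shatters H d}) => ((d : ℕ∞) : WithBot ℕ∞)) k h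

theorem ldim_le_of_forall {H : Set (X → Bool)} {b : WithBot ℕ∞}
    (h : ∀ j : ℕ, Shatters H j → ((j : ℕ∞) : WithBot ℕ∞) ≤ b) : Ldim H ≤ b :=
  iSup₂_le h

theorem le_ldim_iff {H : Set (X → Bool)} {k : ℕ} :
    ((k : ℕ∞) : WithBot ℕ∞) ≤ Ldim H ↔ Shatters H k := by
  constructor
  · intro hle
    by_contra hns
    have hlt : Ldim H < ((k : ℕ∞) : WithBot ℕ∞) := by
      cases k with
      | zero =>
        have : Ldim H ≤ ⊥ := ldim_le_of_forall fun j hj =>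
          absurd (shatters_anti (Nat.zero_le j) hj) hns
        exact lt_of_le_of_lt this (by exact WithBot.bot_lt_coe _)
      | succ m =>
        have : Ldim H ≤ ((m : ℕ∞) : WithBot ℕ∞) := ldim_le_of_forall fun j hj => by
          refine coe2_le.mpr ?_
          by_contra hj'
          exact hns (shatters_anti (by omega) hj)
        exact lt_of_le_of_lt this (coe2_lt.mpr (Nat.lt_succ_self m))
    exact absurd hle (not_le.mpr hlt)
  · exact shatters_le_ldim

theorem ldim_le_coe_iff {H : Set (X → Bool)} {k : ℕ} :
    Ldim H ≤ ((k : ℕ∞) : WithBot ℕ∞) ↔ ¬ Shatters H (k + 1) := by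
  constructor
  · intro hle hsh
    have := le_ldim_iff.mpr hsh
    have := this.trans hle
    exact absurd (coe2_le.mp this) (by omega)
  · intro hns
    refine ldim_le_of_forall fun j hj => coe2_le.mpr ?_
    by_contra hj'
    exact hns (shatters_anti (by omega) hj)

theorem ldim_eq_coe_iff {H : Set (X → Bool)} {k : ℕ} :
    Ldim H = ((k : ℕ∞) : WithBot ℕ∞) ↔ Shatters H k ∧ ¬ Shatters H (k + 1) := by
  rw [le_antisymm_iff, ldim_le_coe_iff, le_ldim_iff, and_comm]

theorem ldim_mono {H1 H2 : Set (X → Bool)} (h : H1 ⊆ H2) : Ldim H1 ≤ Ldim H2 :=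
  ldim_le_of_forall fun j hj => shatters_le_ldim (shatters_mono j h hj)

end Aux
section Aux2

variable {X : Type*}

/-! ### Natural-number Littlestone dimension -/

noncomputable def LdN (G : Set (X → Bool)) : ℕ := sSup {k | Shatters G k}

theorem shatters_ldN {G : Set (X → Bool)} {d : ℕ} (hne : G.Nonempty)
    (hb : ∀ k, Shatters G k → k ≤ d) : Shatters G (LdN G) := by
  have h0 : (0 : ℕ) ∈ {k | Shatters G k} := hne
  exact Nat.sSup_mem ⟨0, h0⟩ ⟨d, fun k hk => hb k hk⟩

theorem ldN_le {G : Set (X → Bool)} {d : ℕ} (hne : G.Nonempty)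
    (hb : ∀ k, Shatters G k → k ≤ d) : LdN G ≤ d :=
  hb _ (shatters_ldN hne hb)

theorem le_ldN_of_shatters {G : Set (X → Bool)} {d k : ℕ}
    (hb : ∀ k, Shatters G k → k ≤ d) (h : Shatters G k) : k ≤ LdN G :=
  le_csSup ⟨d, fun j hj => hb j hj⟩ h

theorem shatters_iff_le_ldN {G : Set (X → Bool)} {d k : ℕ} (hne : G.Nonempty)
    (hb : ∀ k, Shatters G k → k ≤ d) : Shatters G k ↔ k ≤ LdN G :=
  ⟨le_ldN_of_shatters hb, fun hk => shatters_anti hk (shatters_ldN hne hb)⟩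

theorem ldN_lt_of_not_shatters {G : Set (X → Bool)} {d L : ℕ} (hne : G.Nonempty)
    (hb : ∀ k, Shatters G k → k ≤ d) (h : ¬ Shatters G L) : LdN G < L := by
  by_contra h'
  exact h ((shatters_iff_le_ldN hne hb).mpr (by omega))

theorem ldim_eq_ldN {G : Set (X → Bool)} {d : ℕ} (hne : G.Nonempty)
    (hb : ∀ k, Shatters G k → k ≤ d) :
    Ldim G = ((LdN G : ℕ∞) : WithBot ℕ∞) := by
  refine ldim_eq_coe_iff.mpr ⟨shatters_ldN hne hb, fun hc => ?_⟩
  have := le_ldN_of_shatters hb hc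
  omega

theorem ldN_mono {G1 G2 : Set (X → Bool)} {d : ℕ} (hsub : G1 ⊆ G2)
    (hb : ∀ k, Shatters G2 k → k ≤ d) : LdN G1 ≤ LdN G2 := by
  rcases Set.eq_empty_or_nonempty G1 with h | h
  · have : {k | Shatters G1 k} = ∅ := by
      ext k; simp only [Set.mem_setOf_eq, Set.mem_empty_iff_false, iff_false]
      intro hk
      exact absurd (shatters_nonempty k hk) (by simp [h])
    simp only [LdN, this, csSup_empty]
    exact bot_le
  · exact le_ldN_of_shatters hb (shatters_mono _ hsub (shatters_ldN h
      (fun k hk => hb k (shatters_mono k hsub hk))))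

/-! ### Mistakes -/

theorem mistakesFrom_append (A : List (X × Bool) → X → Bool)
    (pre S1 S2 : List (X × Bool)) :
    MistakesFrom A pre (S1 ++ S2) =
      MistakesFrom A pre S1 + MistakesFrom A (pre ++ S1) S2 := by
  induction S1 generalizing pre with
  | nil => simp [MistakesFrom]
  | cons p rest ih =>
    simp only [List.cons_append, MistakesFrom, List.append_eq]
    rw [ih (pre ++ [p]), List.append_assoc, List.singleton_append]
    omega

theorem mistakes_append (A : List (X × Bool) → X → Bool) (P Q : List (X × Bool)) :
    Mistakes A (P ++ Q) = Mistakes A P + MistakesFrom A P Q := by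
  have := mistakesFrom_append A [] P Q
  simpa [Mistakes] using this

theorem mistakes_snoc (A : List (X × Bool) → X → Bool) (P : List (X × Bool)) (x : X) (r : Bool) :
    Mistakes A (P ++ [(x, r)]) = Mistakes A P + (if A P x ≠ r then 1 else 0) := by
  rw [mistakes_append]
  simp [MistakesFrom]

end Aux2
section Aux3

variable {X : Type*}

/-! ### Adversary -/

theorem adversary (H : Set (X → Bool)) (A : List (X × Bool) → X → Bool) :
    ∀ (k : ℕ) (pre : List (X × Bool)), Shatters (VS H pre) k →
      ∃ S', Realizable H (pre ++ S') ∧ k ≤ MistakesFrom A pre S' := by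
  intro k
  induction k with
  | zero =>
    intro pre h
    refine ⟨[], ?_, Nat.zero_le _⟩
    rw [List.append_nil]
    exact realizable_iff_vs_nonempty.mpr h
  | succ k ih =>
    rintro pre ⟨x, hf, ht⟩
    have hsh : Shatters (Restrict (VS H pre) x (!(A pre x))) k := by
      cases hc : A pre x <;> simp only [Bool.not_true, Bool.not_false] <;> assumption
    rw [← vs_append_singleton] at hsh
    obtain ⟨S'', hre, hmk⟩ := ih _ hsh
    refine ⟨(x, !(A pre x)) :: S'', ?_, ?_⟩
    · rw [← List.singleton_append, ← List.append_assoc]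
      exact hre
    · show k + 1 ≤ (if A pre x ≠ !(A pre x) then 1 else 0) + _
      rw [if_pos (by cases A pre x <;> simp)]
      omega

/-! ### SOA-like learners -/

def SOALike (H : Set (X → Bool)) (A : List (X × Bool) → X → Bool) : Prop :=
  ∀ (pre : List (X × Bool)) (x : X) (y : Bool), Realizable H (pre ++ [(x, y)]) →
    A pre x ≠ y → LdN (VS H (pre ++ [(x, y)])) < LdN (VS H pre)

theorem soalike_sum {H : Set (X → Bool)} {d : ℕ} {A : List (X × Bool) → X → Bool}
    (hb : ∀ (P : List (X × Bool)) (k : ℕ), Shatters (VS H P) k → k ≤ d)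
    (hA : SOALike H A) :
    ∀ (S'' pre : List (X × Bool)), Realizable H (pre ++ S'') →
      MistakesFrom A pre S'' + LdN (VS H (pre ++ S'')) ≤ LdN (VS H pre) := by
  intro S''
  induction S'' with
  | nil =>
    intro pre hre
    simp [MistakesFrom]
  | cons p rest ih =>
    intro pre hre
    obtain ⟨x, y⟩ := p
    have heq : pre ++ (x, y) :: rest = (pre ++ [(x, y)]) ++ rest := by simp
    have hre' : Realizable H ((pre ++ [(x, y)]) ++ rest) := heq ▸ hre
    have hrepre : Realizable H (pre ++ [(x, y)]) := realizable_prefix hre'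
    have ih' := ih (pre ++ [(x, y)]) hre'
    rw [heq]
    show (if A pre x ≠ y then 1 else 0) + MistakesFrom A (pre ++ [(x, y)]) rest +
      LdN (VS H ((pre ++ [(x, y)]) ++ rest)) ≤ LdN (VS H pre)
    by_cases hc : A pre x = y
    · rw [if_neg (by simp [hc])]
      have hmono : LdN (VS H (pre ++ [(x, y)])) ≤ LdN (VS H pre) :=
        ldN_mono (vs_mono pre) (hb pre)
      omega
    · rw [if_pos hc]
      have hlt := hA pre x y hrepre hc
      omega

theorem soalike_mistakes_le {H : Set (X → Bool)} {d : ℕ} {A : List (X × Bool) → X → Bool}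
    (hb : ∀ (P : List (X × Bool)) (k : ℕ), Shatters (VS H P) k → k ≤ d)
    (hA : SOALike H A) {S' : List (X × Bool)} (hre : Realizable H S') :
    Mistakes A S' + LdN (VS H S') ≤ LdN (VS H ([] : List (X × Bool))) := by
  have := soalike_sum hb hA S' [] (by simpa using hre)
  simpa [Mistakes] using this

/-! ### The SOA learner -/

noncomputable def SOA (H : Set (X → Bool)) : List (X × Bool) → X → Bool :=
  fun P x =>
    if Ldim (Restrict (VS H P) x false) ≤ Ldim (Restrict (VS H P) x true) then true else false

theorem soa_soalike {H : Set (X → Bool)} {d : ℕ}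
    (hb : ∀ (P : List (X × Bool)) (k : ℕ), Shatters (VS H P) k → k ≤ d) :
    SOALike H (SOA H) := by
  intro pre x y hre hne
  set G := VS H pre with hG
  have hGne : G.Nonempty := realizable_iff_vs_nonempty.mp (realizable_prefix (P := pre) (Q := [(x, y)]) hre)
  have hbG : ∀ k, Shatters G k → k ≤ d := hb pre
  set L := LdN G with hL
  have hnsucc : ¬ Shatters G (L + 1) := fun hc => by
    have := le_ldN_of_shatters hbG hc; omega
  rw [vs_append_singleton]
  have hrne : (Restrict G x y).Nonempty := by
    rw [← vs_append_singleton]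
    exact realizable_iff_vs_nonempty.mp hre
  have hbr : ∀ k, Shatters (Restrict G x y) k → k ≤ d :=
    fun k hk => hbG k (shatters_mono k (restrict_subset G x y) hk)
  refine ldN_lt_of_not_shatters hrne hbr fun hsh => ?_
  -- derive that both restrictions shatter L, contradiction
  apply hnsucc
  cases y with
  | true =>
    -- SOA predicted false, so ¬ (Ldim r_false ≤ Ldim r_true)
    have hpred : ¬ Ldim (Restrict G x false) ≤ Ldim (Restrict G x true) := by
      intro hcon
      apply hne
      simp only [SOA, ← hG]
      rw [if_pos hcon]
    have h1 : ((L : ℕ∞) : WithBot ℕ∞) ≤ Ldim (Restrict G x true) := le_ldim_iff.mpr hsh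
    have h2 : ((L : ℕ∞) : WithBot ℕ∞) ≤ Ldim (Restrict G x false) :=
      h1.trans (le_of_lt (not_le.mp hpred))
    exact ⟨x, le_ldim_iff.mp h2, hsh⟩
  | false =>
    have hpred : Ldim (Restrict G x false) ≤ Ldim (Restrict G x true) := by
      by_contra hcon
      apply hne
      simp only [SOA, ← hG]
      rw [if_neg hcon]
    have h1 : ((L : ℕ∞) : WithBot ℕ∞) ≤ Ldim (Restrict G x false) := le_ldim_iff.mpr hsh
    exact ⟨x, hsh, le_ldim_iff.mp (h1.trans hpred)⟩

end Aux3
section Aux4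

variable {X : Type*} {H : Set (X → Bool)} {d : ℕ}

theorem bddP (hd : Ldim H = ((d : ℕ∞) : WithBot ℕ∞)) :
    ∀ (P : List (X × Bool)) (k : ℕ), Shatters (VS H P) k → k ≤ d := by
  intro P k hk
  have h1 : Shatters H k := shatters_mono k (vs_subset H P) hk
  have := shatters_le_ldim h1
  rw [hd] at this
  exact coe2_le.mp this

theorem ldN_nil (hd : Ldim H = ((d : ℕ∞) : WithBot ℕ∞)) :
    LdN (VS H ([] : List (X × Bool))) = d := by
  have hsh : Shatters H d := (ldim_eq_coe_iff.mp hd).1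
  have h1 : d ≤ LdN (VS H ([] : List (X × Bool))) :=
    le_ldN_of_shatters (bddP hd []) (by rw [vs_nil]; exact hsh)
  have h2 := ldN_le (G := VS H ([] : List (X × Bool)))
    (by rw [vs_nil]; exact shatters_nonempty d hsh) (bddP hd [])
  omega

theorem le_MB {A : List (X × Bool) → X → Bool} {S' : List (X × Bool)}
    (hre : Realizable H S') : (Mistakes A S' : ℕ∞) ≤ MB A H :=
  le_iSup₂ (f := fun (S : List (X × Bool)) (_ : S ∈ {S | Realizable H S}) =>
    ((Mistakes A S : ℕ∞))) S' hre

theorem MB_le_iff {A : List (X × Bool) → X → Bool} {c : ℕ} :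
    MB A H ≤ (c : ℕ∞) ↔ ∀ S', Realizable H S' → Mistakes A S' ≤ c := by
  constructor
  · intro hle S' hre
    exact_mod_cast (le_MB hre).trans hle
  · intro hall
    exact iSup₂_le fun S' hre => by exact_mod_cast hall S' hre

theorem soalike_MB_le (hd : Ldim H = ((d : ℕ∞) : WithBot ℕ∞))
    {A : List (X × Bool) → X → Bool} (hA : SOALike H A) : MB A H ≤ (d : ℕ∞) := by
  refine MB_le_iff.mpr fun S' hre => ?_
  have := soalike_mistakes_le (bddP hd) hA hre
  rw [ldN_nil hd] at this
  omega

theorem MB_ge (hd : Ldim H = ((d : ℕ∞) : WithBot ℕ∞))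
    (B : List (X × Bool) → X → Bool) : (d : ℕ∞) ≤ MB B H := by
  have hsh : Shatters (VS H ([] : List (X × Bool))) d := by
    rw [vs_nil]; exact (ldim_eq_coe_iff.mp hd).1
  obtain ⟨S', hre, hmk⟩ := adversary H B d [] hsh
  rw [List.nil_append] at hre
  calc (d : ℕ∞) ≤ (Mistakes B S' : ℕ∞) := by exact_mod_cast hmk
    _ ≤ MB B H := le_MB hre

theorem iInf_MB (hd : Ldim H = ((d : ℕ∞) : WithBot ℕ∞)) :
    ⨅ B : List (X × Bool) → X → Bool, MB B H = (d : ℕ∞) := by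
  refine le_antisymm ?_ (le_iInf (MB_ge hd))
  exact (iInf_le _ (SOA H)).trans (soalike_MB_le hd (soa_soalike (bddP hd)))

theorem isOptimal_iff (hd : Ldim H = ((d : ℕ∞) : WithBot ℕ∞))
    {A : List (X × Bool) → X → Bool} :
    IsOptimal A H ↔ ∀ S', Realizable H S' → Mistakes A S' ≤ d := by
  rw [IsOptimal, iInf_MB hd]
  constructor
  · intro h; exact MB_le_iff.mp h.le
  · intro h; exact le_antisymm (MB_le_iff.mpr h) (MB_ge hd A)

theorem soalike_optimal (hd : Ldim H = ((d : ℕ∞) : WithBot ℕ∞))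
    {A : List (X × Bool) → X → Bool} (hA : SOALike H A) : IsOptimal A H :=
  (isOptimal_iff hd).mpr (MB_le_iff.mp (soalike_MB_le hd hA))

theorem budget0 (hd : Ldim H = ((d : ℕ∞) : WithBot ℕ∞))
    {A : List (X × Bool) → X → Bool} (hA : IsOptimal A H)
    {P : List (X × Bool)} (hre : Realizable H P) :
    Mistakes A P + LdN (VS H P) ≤ d := by
  have hne : (VS H P).Nonempty := realizable_iff_vs_nonempty.mp hre
  have hsh : Shatters (VS H P) (LdN (VS H P)) := shatters_ldN hne (bddP hd P)
  obtain ⟨S', hre', hmk⟩ := adversary H A (LdN (VS H P)) P hsh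
  have h1 : Mistakes A (P ++ S') ≤ d := (isOptimal_iff hd).mp hA _ hre'
  rw [mistakes_append] at h1
  omega

end Aux4
/-- equivalence of the two conditions of Lemma 8, together with the
argmax-prediction property of optimal learners when they hold. -/
theorem stmt10 {X : Type*} (H : Set (X → Bool)) (d : ℕ)
    (hd : Ldim H = ((d : ℕ∞) : WithBot ℕ∞))
    (S : List (X × Bool)) (hS : Realizable H S) :
    ((∀ t : Fin S.length,
        Ldim (VS H (S.take t.val)) =
          max (Ldim (Restrict (VS H (S.take t.val)) (S.get t).1 false))
              (Ldim (Restrict (VS H (S.take t.val)) (S.get t).1 true)) ∧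
        Ldim (VS H (S.take t.val)) ≤ Ldim (VS H (S.take (t.val + 1))) + 1) ↔
      (∀ A : List (X × Bool) → X → Bool, IsOptimal A H →
        ((Mistakes A S : ℕ∞) : WithBot ℕ∞) + Ldim (VS H S) = Ldim H)) ∧
    ((∀ t : Fin S.length,
        Ldim (VS H (S.take t.val)) =
          max (Ldim (Restrict (VS H (S.take t.val)) (S.get t).1 false))
              (Ldim (Restrict (VS H (S.take t.val)) (S.get t).1 true)) ∧
        Ldim (VS H (S.take t.val)) ≤ Ldim (VS H (S.take (t.val + 1))) + 1) →
      ∀ t : Fin S.length, ∀ A : List (X × Bool) → X → Bool, IsOptimal A H →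
        ∀ r : Bool,
          Ldim (Restrict (VS H (S.take t.val)) (S.get t).1 (!r)) <
            Ldim (Restrict (VS H (S.take t.val)) (S.get t).1 r) →
          A (S.take t.val) (S.get t).1 = r) := by
  classical
  have hb := bddP hd
  have hneu : ∀ u : ℕ, (VS H (S.take u)).Nonempty :=
    fun u => realizable_iff_vs_nonempty.mp (realizable_take hS u)
  have hLdimu : ∀ u : ℕ,
      Ldim (VS H (S.take u)) = ((LdN (VS H (S.take u)) : ℕ∞) : WithBot ℕ∞) :=
    fun u => ldim_eq_ldN (hneu u) (hb _)
  have htake : ∀ t : Fin S.length,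
      S.take (t.val + 1) = S.take t.val ++ [((S.get t).1, (S.get t).2)] := by
    intro t
    rw [List.get_eq_getElem]
    exact (List.take_concat_get' S t.val t.isLt).symm
  have hvs : ∀ t : Fin S.length,
      VS H (S.take (t.val + 1)) = Restrict (VS H (S.take t.val)) (S.get t).1 (S.get t).2 := by
    intro t
    rw [htake t, vs_append_singleton]
  -- translation of condition 1
  have hc1iff : ∀ t : Fin S.length,
      (Ldim (VS H (S.take t.val)) =
        max (Ldim (Restrict (VS H (S.take t.val)) (S.get t).1 false))
            (Ldim (Restrict (VS H (S.take t.val)) (S.get t).1 true))) ↔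
      (Shatters (Restrict (VS H (S.take t.val)) (S.get t).1 false) (LdN (VS H (S.take t.val))) ∨
       Shatters (Restrict (VS H (S.take t.val)) (S.get t).1 true) (LdN (VS H (S.take t.val)))) := by
    intro t
    constructor
    · intro hmax
      rcases max_choice (Ldim (Restrict (VS H (S.take t.val)) (S.get t).1 false))
        (Ldim (Restrict (VS H (S.take t.val)) (S.get t).1 true)) with h | h
      · exact Or.inl (le_ldim_iff.mp (le_of_eq ((hLdimu t.val).symm.trans (hmax.trans h))))
      · exact Or.inr (le_ldim_iff.mp (le_of_eq ((hLdimu t.val).symm.trans (hmax.trans h))))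
    · intro hdisj
      have hub := max_le
        (ldim_mono (restrict_subset (VS H (S.take t.val)) (S.get t).1 false))
        (ldim_mono (restrict_subset (VS H (S.take t.val)) (S.get t).1 true))
      refine le_antisymm ?_ hub
      rcases hdisj with h | h
      · exact (hLdimu t.val).le.trans ((le_ldim_iff.mpr h).trans (le_max_left _ _))
      · exact (hLdimu t.val).le.trans ((le_ldim_iff.mpr h).trans (le_max_right _ _))
  -- translation of condition 2
  have hc2iff : ∀ t : Fin S.length,
      (Ldim (VS H (S.take t.val)) ≤ Ldim (VS H (S.take (t.val + 1))) + 1) ↔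
      LdN (VS H (S.take t.val)) ≤ LdN (VS H (S.take (t.val + 1))) + 1 := by
    intro t
    rw [hLdimu t.val, hLdimu (t.val + 1), coe2_add_one, coe2_le]
  -- the forward induction
  have hfwd : (∀ t : Fin S.length,
      (Shatters (Restrict (VS H (S.take t.val)) (S.get t).1 false) (LdN (VS H (S.take t.val))) ∨
       Shatters (Restrict (VS H (S.take t.val)) (S.get t).1 true) (LdN (VS H (S.take t.val)))) ∧
      LdN (VS H (S.take t.val)) ≤ LdN (VS H (S.take (t.val + 1))) + 1) →
      ∀ A : List (X × Bool) → X → Bool, IsOptimal A H →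
      ∀ u : ℕ, u ≤ S.length →
        Mistakes A (S.take u) + LdN (VS H (S.take u)) = d := by
    intro hCN A hA u
    induction u with
    | zero =>
      intro _
      have h0 : Mistakes A (List.take 0 S) = 0 := rfl
      rw [h0, List.take_zero, ldN_nil hd]
      omega
    | succ u ih =>
      intro hu
      have hu' : u < S.length := by omega
      set t : Fin S.length := ⟨u, hu'⟩ with ht
      have htu : t.val = u := rfl
      have ihu := ih (by omega)
      obtain ⟨hc1, hc2⟩ := hCN t
      rw [htu] at hc1 hc2
      have htk : S.take (u + 1) = S.take u ++ [((S.get t).1, (S.get t).2)] := by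
        have := htake t; rwa [htu] at this
      have hvst : VS H (S.take (u + 1)) = Restrict (VS H (S.take u)) (S.get t).1 (S.get t).2 := by
        have := hvs t; rwa [htu] at this
      by_cases hpred : A (S.take u) (S.get t).1 = (S.get t).2
      · -- correct prediction: no drop
        have hm : Mistakes A (S.take (u + 1)) = Mistakes A (S.take u) := by
          rw [htk, mistakes_snoc, if_neg (not_not_intro hpred), Nat.add_zero]
        suffices hLeq : LdN (VS H (S.take (u + 1))) = LdN (VS H (S.take u)) by
          rw [hm, hLeq]; exact ihu
        have hle : LdN (VS H (S.take (u + 1))) ≤ LdN (VS H (S.take u)) := by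
          rw [htk]; exact ldN_mono (vs_mono _) (hb _)
        by_contra hne'
        have hlt : LdN (VS H (S.take (u + 1))) < LdN (VS H (S.take u)) :=
          lt_of_le_of_ne hle hne'
        have hy : ¬ Shatters (Restrict (VS H (S.take u)) (S.get t).1 (S.get t).2)
            (LdN (VS H (S.take u))) := by
          intro hsh
          rw [← hvst] at hsh
          have := le_ldN_of_shatters (hb (S.take (u + 1))) hsh
          omega
        have hny : Shatters (Restrict (VS H (S.take u)) (S.get t).1 (!(S.get t).2))
            (LdN (VS H (S.take u))) := by
          rcases Bool.eq_false_or_eq_true ((S.get t).2) with hyy | hyy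
          · rw [hyy] at hy ⊢
            rw [show (!true) = false from rfl]
            rcases hc1 with h | h
            · exact h
            · exact absurd h hy
          · rw [hyy] at hy ⊢
            rw [show (!false) = true from rfl]
            rcases hc1 with h | h
            · exact absurd h hy
            · exact h
        have hre' : Realizable H (S.take u ++ [((S.get t).1, !(S.get t).2)]) := by
          rw [realizable_iff_vs_nonempty, vs_append_singleton]
          exact shatters_nonempty _ hny
        have hbud := budget0 hd hA hre'
        rw [mistakes_snoc, vs_append_singleton,
          if_pos (show A (S.take u) (S.get t).1 ≠ !(S.get t).2 by
            rw [hpred]; cases (S.get t).2 <;> simp)] at hbud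
        have hge := le_ldN_of_shatters
          (fun k hk => hb (S.take u ++ [((S.get t).1, !(S.get t).2)]) k
            (by rwa [vs_append_singleton])) hny
        omega
      · -- mistake: drop exactly one
        have hm : Mistakes A (S.take (u + 1)) = Mistakes A (S.take u) + 1 := by
          rw [htk, mistakes_snoc, if_pos hpred]
        have hnot : ¬ Shatters (VS H (S.take (u + 1))) (LdN (VS H (S.take u))) := by
          intro hsh
          have hbud := budget0 hd hA (realizable_take hS (u + 1))
          rw [hm] at hbud
          have := le_ldN_of_shatters (hb (S.take (u + 1))) hsh
          omega
        have hlt : LdN (VS H (S.take (u + 1))) < LdN (VS H (S.take u)) :=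
          ldN_lt_of_not_shatters (hneu _) (hb _) hnot
        rw [hm]
        omega
  have hCNof : (∀ t : Fin S.length,
      Ldim (VS H (S.take t.val)) =
        max (Ldim (Restrict (VS H (S.take t.val)) (S.get t).1 false))
            (Ldim (Restrict (VS H (S.take t.val)) (S.get t).1 true)) ∧
      Ldim (VS H (S.take t.val)) ≤ Ldim (VS H (S.take (t.val + 1))) + 1) →
      (∀ t : Fin S.length,
      (Shatters (Restrict (VS H (S.take t.val)) (S.get t).1 false) (LdN (VS H (S.take t.val))) ∨
       Shatters (Restrict (VS H (S.take t.val)) (S.get t).1 true) (LdN (VS H (S.take t.val)))) ∧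
      LdN (VS H (S.take t.val)) ≤ LdN (VS H (S.take (t.val + 1))) + 1) :=
    fun hC t => ⟨(hc1iff t).mp (hC t).1, (hc2iff t).mp (hC t).2⟩
  refine ⟨⟨?_, ?_⟩, ?_⟩
  · -- (A) implies (B)
    intro hC A hA
    have hfin := hfwd (hCNof hC) A hA S.length le_rfl
    rw [List.take_length] at hfin
    rw [hd, ldim_eq_ldN (realizable_iff_vs_nonempty.mp hS) (hb S), coe2_add, coe2_inj]
    exact hfin
  · -- (B) implies (A)
    intro hB
    by_contra hnot
    rw [not_forall] at hnot
    obtain ⟨t, hfail⟩ := hnot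
    rw [not_and_or] at hfail
    have hLS := ldim_eq_ldN (realizable_iff_vs_nonempty.mp hS) (hb S)
    rcases hfail with hnc1 | hnc2
    · -- condition 1 fails at t : both restrictions fail to shatter L t
      rw [hc1iff t, not_or] at hnc1
      obtain ⟨hnf, hnt⟩ := hnc1
      set A' : List (X × Bool) → X → Bool :=
        fun Q z => if Q = S.take t.val ∧ z = (S.get t).1 then (S.get t).2 else SOA H Q z
        with hA'def
      have hA'at : A' (S.take t.val) (S.get t).1 = (S.get t).2 := if_pos ⟨rfl, rfl⟩
      have hA'like : SOALike H A' := by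
        intro pre z w hre hnp
        by_cases hcase : pre = S.take t.val ∧ z = (S.get t).1
        · obtain ⟨hp, hz⟩ := hcase
          subst hp; subst hz
          rw [vs_append_singleton]
          refine ldN_lt_of_not_shatters ?_
            (fun k hk => hb (S.take t.val ++ [((S.get t).1, w)]) k
              (by rwa [vs_append_singleton])) ?_
          · rw [← vs_append_singleton]
            exact realizable_iff_vs_nonempty.mp hre
          · rcases Bool.eq_false_or_eq_true w with hw | hw <;> rw [hw]
            · exact hnt
            · exact hnf
        · have hval : A' pre z = SOA H pre z := if_neg hcase
          rw [hval] at hnp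
          exact soa_soalike hb pre z w hre hnp
      have hA'opt : IsOptimal A' H := soalike_optimal hd hA'like
      have heq := hB A' hA'opt
      rw [hd, hLS, coe2_add, coe2_inj] at heq
      have hsplit : S.take (t.val + 1) ++ S.drop (t.val + 1) = S := List.take_append_drop _ _
      have hm : Mistakes A' S = Mistakes A' (S.take (t.val + 1))
          + MistakesFrom A' (S.take (t.val + 1)) (S.drop (t.val + 1)) := by
        conv_lhs => rw [← hsplit]
        rw [mistakes_append]
      have hsum := soalike_sum hb hA'like (S.drop (t.val + 1)) (S.take (t.val + 1))
        (by rw [hsplit]; exact hS)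
      rw [hsplit] at hsum
      have hstep : Mistakes A' (S.take (t.val + 1)) = Mistakes A' (S.take t.val) := by
        rw [htake t, mistakes_snoc, if_neg (not_not_intro hA'at), Nat.add_zero]
      have hpre := soalike_mistakes_le hb hA'like (realizable_take hS t.val)
      rw [ldN_nil hd] at hpre
      have hdrop : LdN (VS H (S.take (t.val + 1))) < LdN (VS H (S.take t.val)) := by
        rw [hvs t]
        refine ldN_lt_of_not_shatters ?_
          (fun k hk => hb (S.take (t.val + 1)) k (by rw [hvs t]; exact hk)) ?_
        · rw [← hvs t]; exact hneu _
        · rcases Bool.eq_false_or_eq_true ((S.get t).2) with hyy | hyy <;> rw [hyy]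
          · exact hnt
          · exact hnf
      omega
    · -- condition 2 fails at t
      rw [hc2iff t] at hnc2
      set A' : List (X × Bool) → X → Bool :=
        fun Q z => if Q = S.take t.val ∧ z = (S.get t).1 then !(S.get t).2 else SOA H Q z
        with hA'def
      have hA'at : A' (S.take t.val) (S.get t).1 = !(S.get t).2 := if_pos ⟨rfl, rfl⟩
      have hA'like : SOALike H A' := by
        intro pre z w hre hnp
        by_cases hcase : pre = S.take t.val ∧ z = (S.get t).1
        · obtain ⟨hp, hz⟩ := hcase
          subst hp; subst hz
          rw [hA'at] at hnp
          have hw : w = (S.get t).2 := by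
            revert hnp
            rcases Bool.eq_false_or_eq_true w with h1 | h1 <;>
              rcases Bool.eq_false_or_eq_true ((S.get t).2) with h2 | h2 <;>
                rw [h1, h2] <;> intro hnp <;> simp_all
          rw [hw, ← htake t]
          omega
        · have hval : A' pre z = SOA H pre z := if_neg hcase
          rw [hval] at hnp
          exact soa_soalike hb pre z w hre hnp
      have hA'opt : IsOptimal A' H := soalike_optimal hd hA'like
      have heq := hB A' hA'opt
      rw [hd, hLS, coe2_add, coe2_inj] at heq
      have hsplit : S.take (t.val + 1) ++ S.drop (t.val + 1) = S := List.take_append_drop _ _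
      have hm : Mistakes A' S = Mistakes A' (S.take (t.val + 1))
          + MistakesFrom A' (S.take (t.val + 1)) (S.drop (t.val + 1)) := by
        conv_lhs => rw [← hsplit]
        rw [mistakes_append]
      have hsum := soalike_sum hb hA'like (S.drop (t.val + 1)) (S.take (t.val + 1))
        (by rw [hsplit]; exact hS)
      rw [hsplit] at hsum
      have hstep : Mistakes A' (S.take (t.val + 1)) = Mistakes A' (S.take t.val) + 1 := by
        rw [htake t, mistakes_snoc, if_pos ?_]
        rw [hA'at]
        exact Bool.not_ne_self _
      have hpre := soalike_mistakes_le hb hA'like (realizable_take hS t.val)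
      rw [ldN_nil hd] at hpre
      omega
  · -- argmax prediction
    intro hC t A hA r hlt
    have hfin := hfwd (hCNof hC) A hA t.val (le_of_lt t.isLt)
    have hmax := (hC t).1
    have hRr : Shatters (Restrict (VS H (S.take t.val)) (S.get t).1 r)
        (LdN (VS H (S.take t.val))) := by
      apply le_ldim_iff.mp
      rw [← hLdimu t.val, hmax]
      rcases Bool.eq_false_or_eq_true r with hr | hr <;> rw [hr] <;> rw [hr] at hlt
      · rw [show (!true) = false from rfl] at hlt
        exact max_le hlt.le le_rfl
      · rw [show (!false) = true from rfl] at hlt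
        exact max_le le_rfl hlt.le
    by_contra hne'
    have hre' : Realizable H (S.take t.val ++ [((S.get t).1, r)]) := by
      rw [realizable_iff_vs_nonempty, vs_append_singleton]
      exact shatters_nonempty _ hRr
    have hbud := budget0 hd hA hre'
    rw [mistakes_snoc, if_pos hne', vs_append_singleton] at hbud
    have hge := le_ldN_of_shatters
      (fun k hk => hb (S.take t.val ++ [((S.get t).1, r)]) k
        (by rwa [vs_append_singleton])) hRr
    omega
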